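/- Let $\ell_0 : \mathbb{R}^n \to [0,\infty)$ be differentiable and satisfy the PL condition $\|\nabla \ell_0(u)\|^2 \ge \mu \ell_0(u)$. Let $T : \mathbb{R}^n \to \mathbb{R}^n$ be differentiable and suppose that at every point $x$ the Jacobian $DT(x)$ satisfies $DT(x) = \Sigma(x)/(\sigma^2\sqrt{\alpha})$ for a symmetric positive semidefinite matrix $\Sigma(x)$ whose smallest eigenvalue is at least $\lambda_{\min} > 0$. Then the composed function $\ell(x) = \ell_0(T(x))$ satisfies the PL condition $\|\nabla \ell(x)\|^2 \ge \frac{\mu \lambda_{\min}^2}{\sigma^4 \alpha} \ell(x)$. -/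

import Mathlib

open scoped RealInnerProductSpace

/-- The PL condition transfers through composition with a map whose Jacobian is
`Σ(x)/(σ²√α)` for a symmetric PSD matrix `Σ(x)` with eigenvalues at least `λmin`. -/
theorem pl_transfer_through_tweedie (n : ℕ) (μ lmin σ α : ℝ)
    (hμ : 0 < μ) (hlmin : 0 < lmin) (hσ : 0 < σ) (hα : 0 < α)
    (ℓ0 : EuclideanSpace ℝ (Fin n) → ℝ) (hℓ0diff : Differentiable ℝ ℓ0)
    (hℓ0nonneg : ∀ u, 0 ≤ ℓ0 u)
    (hPL : ∀ u, μ * ℓ0 u ≤ ‖gradient ℓ0 u‖ ^ 2)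
    (T : EuclideanSpace ℝ (Fin n) → EuclideanSpace ℝ (Fin n))
    (hTdiff : Differentiable ℝ T)
    (hJac : ∀ x, ∃ S : EuclideanSpace ℝ (Fin n) →L[ℝ] EuclideanSpace ℝ (Fin n),
      fderiv ℝ T x = (σ ^ 2 * Real.sqrt α)⁻¹ • S ∧
      (∀ u v, ⟪S u, v⟫ = ⟪u, S v⟫) ∧
      (∀ v, lmin * ‖v‖ ^ 2 ≤ ⟪S v, v⟫)) :
    ∀ x, μ * lmin ^ 2 / (σ ^ 4 * α) * ℓ0 (T x) ≤
      ‖gradient (fun y => ℓ0 (T y)) x‖ ^ 2 := by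
  intro x
  obtain ⟨S, hS, hsym, hpsd⟩ := hJac x
  set c : ℝ := σ ^ 2 * Real.sqrt α with hc
  have hcpos : 0 < c := mul_pos (pow_pos hσ 2) (Real.sqrt_pos.mpr hα)
  set g : EuclideanSpace ℝ (Fin n) := gradient ℓ0 (T x) with hg
  -- fderiv of ℓ0 at T x applied to v is ⟪g, v⟫
  have hfℓ0 : ∀ v, fderiv ℝ ℓ0 (T x) v = ⟪g, v⟫ := by
    intro v
    have : fderiv ℝ ℓ0 (T x) = InnerProductSpace.toDual ℝ _ g := by
      rw [hg, gradient, (InnerProductSpace.toDual ℝ _).apply_symm_apply]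
    rw [this]; rfl
  -- gradient of the composition
  have hcomp : HasFDerivAt (fun y => ℓ0 (T y))
      ((fderiv ℝ ℓ0 (T x)).comp (fderiv ℝ T x)) x :=
    (hℓ0diff (T x)).hasFDerivAt.comp x (hTdiff x).hasFDerivAt
  have hgradcomp : gradient (fun y => ℓ0 (T y)) x = c⁻¹ • S g := by
    have hG : HasGradientAt (fun y => ℓ0 (T y)) (c⁻¹ • S g) x := by
      rw [hasGradientAt_iff_hasFDerivAt]
      refine hcomp.congr_fderiv ?_
      symm
      apply ContinuousLinearMap.ext
      intro v
      have : (InnerProductSpace.toDual ℝ _ (c⁻¹ • S g)) v = ⟪c⁻¹ • S g, v⟫ := rfl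
      rw [this]
      simp only [ContinuousLinearMap.comp_apply, hS, ContinuousLinearMap.smul_apply,
        hfℓ0, inner_smul_left, inner_smul_right, RCLike.conj_to_real]
      rw [hsym g v]
    exact ((hℓ0diff.comp hTdiff) x).hasGradientAt.unique hG
  rw [hgradcomp]
  have hSg : lmin * ‖g‖ ≤ ‖S g‖ := by
    rcases eq_or_ne g 0 with h0 | h0
    · simp [h0]
    · have h1 : lmin * ‖g‖ ^ 2 ≤ ⟪S g, g⟫ := hpsd g
      have h2 : ⟪S g, g⟫ ≤ ‖S g‖ * ‖g‖ := real_inner_le_norm _ _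
      have hgpos : 0 < ‖g‖ := norm_pos_iff.mpr h0
      nlinarith
  have hgnorm : μ * ℓ0 (T x) ≤ ‖g‖ ^ 2 := hPL (T x)
  have hnorm : ‖c⁻¹ • S g‖ ^ 2 = c⁻¹ ^ 2 * ‖S g‖ ^ 2 := by
    rw [norm_smul]
    rw [Real.norm_eq_abs, abs_of_pos (inv_pos.mpr hcpos)]
    ring
  have hc2 : c ^ 2 = σ ^ 4 * α := by
    rw [hc, mul_pow, Real.sq_sqrt hα.le]; ring
  rw [hnorm]
  have hSg2 : lmin ^ 2 * ‖g‖ ^ 2 ≤ ‖S g‖ ^ 2 := by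
    have h1 : 0 ≤ lmin * ‖g‖ := mul_nonneg hlmin.le (norm_nonneg _)
    nlinarith
  have hca : σ ^ 4 * α = c ^ 2 := hc2.symm
  rw [div_mul_eq_mul_div, div_le_iff₀ (by rw [hca]; positivity)]
  rw [hca]
  have : 0 ≤ c⁻¹ ^ 2 := by positivity
  have hμnn : 0 ≤ ℓ0 (T x) := hℓ0nonneg (T x)
  have hfin : μ * lmin ^ 2 * ℓ0 (T x) ≤ lmin ^ 2 * ‖g‖ ^ 2 := by nlinarith
  calc μ * lmin ^ 2 * ℓ0 (T x) ≤ lmin ^ 2 * ‖g‖ ^ 2 := hfin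
    _ ≤ ‖S g‖ ^ 2 := hSg2
    _ = c⁻¹ ^ 2 * ‖S g‖ ^ 2 * c ^ 2 := by field_simp
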